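/- arXiv:2201.05586 — 2 statements merged into one kernel-verified Lean document; each statement's English description precedes it below -/
import Mathlib

section
/- Assume var(f̂) ≠ 0. For each k ∈ {1,…,d}, the total Sobol' index S_k^tot = 1 − var(E(f̂ | x_l, l ≠ k)) / var(f̂) of the ELM surrogate satisfies S_k^tot = 1 − (1/var(f̂)) Σ_{j=1}^n Σ_{i=1}^n β_j β_i e^{b_j + b_i} ε(w_{j,k}) ε(w_{i,k}) ( ∏_{r≠k} ε(w_{j,r} + w_{i,r}) − ∏_{r≠k} ε(w_{j,r}) ε(w_{i,r}) ). -/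
open MeasureTheory Real

/-- The function ε(t) = (e^t − 1)/t for t ≠ 0, and ε(0) = 1. -/
noncomputable def eps (t : ℝ) : ℝ := if t = 0 then 1 else (Real.exp t - 1) / t

/-- ELM surrogate with exponential activation:
`f̂(x) = Σ_{j=1}^n β_j exp(w_jᵀ x + b_j)`. -/
noncomputable def elm {d n : ℕ} (β b : Fin n → ℝ) (w : Fin n → Fin d → ℝ)
    (x : Fin d → ℝ) : ℝ :=
  ∑ j, β j * Real.exp ((∑ l, w j l * x l) + b j)


/-- `h_k(x) = E(f̂ | x_l, l ≠ k)`: the integral of the ELM surrogate over the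
`k`-th coordinate with the remaining coordinates fixed. -/
noncomputable def hk {d n : ℕ} (β b : Fin n → ℝ) (w : Fin n → Fin d → ℝ)
    (k : Fin d) (x : Fin d → ℝ) : ℝ :=
  ∫ t in Set.Icc (0 : ℝ) 1, elm β b w (Function.update x k t)

/-- Variance of the ELM surrogate over the uniform measure on `[0,1]^d`. -/
noncomputable def elmVar {d n : ℕ} (β b : Fin n → ℝ) (w : Fin n → Fin d → ℝ) : ℝ :=
  (∫ x in Set.Icc (0 : Fin d → ℝ) 1, (elm β b w x) ^ 2) -
    (∫ x in Set.Icc (0 : Fin d → ℝ) 1, elm β b w x) ^ 2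

lemma eps_zero : eps 0 = 1 := if_pos rfl

/-- One-dimensional integral of `exp (c*t)` over `[0,1]`. -/
lemma integral_exp_mul (c : ℝ) :
    ∫ t in Set.Icc (0 : ℝ) 1, Real.exp (c * t) = eps c := by
  rw [MeasureTheory.integral_Icc_eq_integral_Ioc,
    ← intervalIntegral.integral_of_le (zero_le_one' ℝ)]
  by_cases hc : c = 0
  · simp [hc, eps_zero]
  · rw [intervalIntegral.integral_comp_mul_left (fun x => Real.exp x) hc]
    simp [integral_exp, eps, hc, smul_eq_mul, div_eq_inv_mul]

/-- Restriction of the volume on a box is the product of restrictions. -/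
lemma restrict_box (ι : Type*) [Fintype ι] :
    (volume : Measure (ι → ℝ)).restrict (Set.Icc 0 1)
      = Measure.pi (fun _ : ι => (volume : Measure ℝ).restrict (Set.Icc 0 1)) := by
  have h : Set.Icc (0 : ι → ℝ) 1 = Set.pi Set.univ (fun _ : ι => Set.Icc (0:ℝ) 1) := by
    rw [← Set.pi_univ_Icc]; rfl
  refine (Measure.pi_eq (μ := fun _ : ι => (volume : Measure ℝ).restrict (Set.Icc 0 1))
    (fun s hs => ?_)).symm
  rw [h, Measure.restrict_apply (MeasurableSet.univ_pi hs), ← Set.pi_inter_distrib,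
    volume_pi_pi]
  exact Finset.prod_congr rfl fun i _ => (Measure.restrict_apply (hs i)).symm

/-- Integral of a product over a box is the product of integrals. -/
lemma integral_box {ι : Type*} [Fintype ι] (f : ι → ℝ → ℝ) :
    ∫ x in Set.Icc (0 : ι → ℝ) 1, ∏ i, f i (x i)
      = ∏ i, ∫ t in Set.Icc (0 : ℝ) 1, f i t := by
  rw [restrict_box]
  exact MeasureTheory.integral_fintype_prod_eq_prod (E := fun _ => ℝ) f

lemma box_integral_exp {ι : Type*} [Fintype ι] (c : ι → ℝ) :
    ∫ x in Set.Icc (0 : ι → ℝ) 1, Real.exp (∑ l, c l * x l) = ∏ l, eps (c l) := by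
  have h : ∀ x : ι → ℝ, Real.exp (∑ l, c l * x l) = ∏ l, Real.exp (c l * x l) :=
    fun x => Real.exp_sum _ _
  simp only [h]
  rw [integral_box (fun i t => Real.exp (c i * t))]
  exact Finset.prod_congr rfl fun i _ => integral_exp_mul (c i)

lemma box_integral_exp_erase {ι : Type*} [Fintype ι] [DecidableEq ι] (c : ι → ℝ) (k : ι) :
    ∫ x in Set.Icc (0 : ι → ℝ) 1,
        Real.exp (∑ l ∈ Finset.univ.erase k, c l * x l)
      = ∏ l ∈ Finset.univ.erase k, eps (c l) := by
  have h : ∀ x : ι → ℝ, (∑ l, (if l = k then 0 else c l) * x l)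
      = ∑ l ∈ Finset.univ.erase k, c l * x l := by
    intro x
    rw [← Finset.add_sum_erase _ _ (Finset.mem_univ k)]
    rw [if_pos rfl, zero_mul, zero_add]
    exact Finset.sum_congr rfl fun l hl => by
      rw [if_neg (Finset.ne_of_mem_erase hl)]
  have h2 := box_integral_exp (fun l => if l = k then 0 else c l)
  simp only [h] at h2
  rw [h2, ← Finset.mul_prod_erase _ _ (Finset.mem_univ k), if_pos rfl, eps_zero, one_mul]
  exact Finset.prod_congr rfl fun l hl => by
    rw [if_neg (Finset.ne_of_mem_erase hl)]

/-- Explicit form of `hk`. -/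
lemma hk_eq {d n : ℕ} (β b : Fin n → ℝ) (w : Fin n → Fin d → ℝ) (k : Fin d)
    (x : Fin d → ℝ) :
    hk β b w k x = ∑ j, (β j * Real.exp (b j) * eps (w j k)) *
      Real.exp (∑ l ∈ Finset.univ.erase k, w j l * x l) := by
  have hsum : ∀ (j : Fin n) (t : ℝ), (∑ l, w j l * Function.update x k t l)
      = w j k * t + ∑ l ∈ Finset.univ.erase k, w j l * x l := by
    intro j t
    rw [← Finset.add_sum_erase _ _ (Finset.mem_univ k), Function.update_self]
    congr 1
    exact Finset.sum_congr rfl fun l hl => by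
      rw [Function.update_of_ne (Finset.ne_of_mem_erase hl)]
  have hfun : ∀ t : ℝ, elm β b w (Function.update x k t)
      = ∑ j, (β j * Real.exp ((∑ l ∈ Finset.univ.erase k, w j l * x l) + b j)) *
          Real.exp (w j k * t) := by
    intro t
    unfold elm
    refine Finset.sum_congr rfl fun j _ => ?_
    rw [hsum j t, show w j k * t + (∑ l ∈ Finset.univ.erase k, w j l * x l) + b j
      = ((∑ l ∈ Finset.univ.erase k, w j l * x l) + b j) + w j k * t from by ring,
      Real.exp_add]
    ring
  unfold hk
  rw [MeasureTheory.integral_congr_ae (Filter.Eventually.of_forall hfun)]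
  have hint : ∀ j ∈ (Finset.univ : Finset (Fin n)), Integrable (fun t : ℝ =>
      (β j * Real.exp ((∑ l ∈ Finset.univ.erase k, w j l * x l) + b j)) *
        Real.exp (w j k * t)) ((volume : Measure ℝ).restrict (Set.Icc 0 1)) :=
    fun j _ => Continuous.integrableOn_Icc (by fun_prop)
  rw [MeasureTheory.integral_finset_sum _ hint]
  refine Finset.sum_congr rfl fun j _ => ?_
  rw [MeasureTheory.integral_const_mul, integral_exp_mul, Real.exp_add]
  ring

/-- Assuming `var(f̂) ≠ 0`, the total Sobol' index
`S_k^tot = 1 − var(E(f̂ | x_l, l ≠ k)) / var(f̂)` of the ELM surrogate satisfies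
`S_k^tot = 1 − (1/var(f̂)) Σ_j Σ_i β_j β_i e^{b_j+b_i} ε(w_{j,k}) ε(w_{i,k})
  (∏_{r≠k} ε(w_{j,r}+w_{i,r}) − ∏_{r≠k} ε(w_{j,r}) ε(w_{i,r}))`. -/
theorem elm_total_sobol (d n : ℕ) (hd : 0 < d) (hn : 0 < n)
    (β b : Fin n → ℝ) (w : Fin n → Fin d → ℝ) (k : Fin d)
    (hvar : elmVar β b w ≠ 0) :
    1 - ((∫ x in Set.Icc (0 : Fin d → ℝ) 1, (hk β b w k x) ^ 2) -
          (∫ x in Set.Icc (0 : Fin d → ℝ) 1, hk β b w k x) ^ 2) / elmVar β b w =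
      1 - (1 / elmVar β b w) *
        ∑ j, ∑ i, β j * β i * Real.exp (b j + b i) *
          (eps (w j k) * eps (w i k)) *
          ((∏ r ∈ Finset.univ.erase k, eps (w j r + w i r)) -
            ∏ r ∈ Finset.univ.erase k, eps (w j r) * eps (w i r)) := by
  set a : Fin n → ℝ := fun j => β j * Real.exp (b j) * eps (w j k) with ha
  have hcont : ∀ (c : Fin d → ℝ), Continuous (fun x : Fin d → ℝ =>
      Real.exp (∑ l ∈ Finset.univ.erase k, c l * x l)) := by
    intro c
    exact Real.continuous_exp.comp (continuous_finset_sum _ fun l _ =>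
      continuous_const.mul (continuous_apply l))
  -- the mean of hk
  have hmean : (∫ x in Set.Icc (0 : Fin d → ℝ) 1, hk β b w k x)
      = ∑ j, a j * ∏ r ∈ Finset.univ.erase k, eps (w j r) := by
    rw [MeasureTheory.integral_congr_ae
      (Filter.Eventually.of_forall (hk_eq β b w k))]
    rw [MeasureTheory.integral_finset_sum _ (fun j _ =>
      (continuous_const.fun_mul (hcont (w j))).integrableOn_Icc)]
    refine Finset.sum_congr rfl fun j _ => ?_
    rw [MeasureTheory.integral_const_mul, box_integral_exp_erase, ha]
  -- the second moment of hk
  have hsq : (∫ x in Set.Icc (0 : Fin d → ℝ) 1, (hk β b w k x) ^ 2)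
      = ∑ j, ∑ i, a j * a i * ∏ r ∈ Finset.univ.erase k, eps (w j r + w i r) := by
    have hpt : ∀ x : Fin d → ℝ, (hk β b w k x) ^ 2
        = ∑ j, ∑ i, (a j * a i) *
            Real.exp (∑ l ∈ Finset.univ.erase k, (w j l + w i l) * x l) := by
      intro x
      rw [hk_eq, sq, Finset.sum_mul_sum]
      refine Finset.sum_congr rfl fun j _ => Finset.sum_congr rfl fun i _ => ?_
      have e1 : Real.exp (∑ l ∈ Finset.univ.erase k, w j l * x l) *
          Real.exp (∑ l ∈ Finset.univ.erase k, w i l * x l)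
          = Real.exp (∑ l ∈ Finset.univ.erase k, (w j l + w i l) * x l) := by
        rw [← Real.exp_add, ← Finset.sum_add_distrib]
        congr 1
        exact Finset.sum_congr rfl fun l _ => by ring
      rw [mul_mul_mul_comm, e1]
    rw [MeasureTheory.integral_congr_ae (Filter.Eventually.of_forall hpt)]
    rw [MeasureTheory.integral_finset_sum _ (fun j _ =>
      MeasureTheory.integrable_finset_sum _ (fun i _ =>
        (continuous_const.fun_mul (hcont (fun l => w j l + w i l))).integrableOn_Icc))]
    refine Finset.sum_congr rfl fun j _ => ?_
    rw [MeasureTheory.integral_finset_sum _ (fun i _ =>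
      (continuous_const.fun_mul (hcont (fun l => w j l + w i l))).integrableOn_Icc)]
    refine Finset.sum_congr rfl fun i _ => ?_
    rw [MeasureTheory.integral_const_mul, box_integral_exp_erase]
  have key : (∫ x in Set.Icc (0 : Fin d → ℝ) 1, (hk β b w k x) ^ 2) -
        (∫ x in Set.Icc (0 : Fin d → ℝ) 1, hk β b w k x) ^ 2
      = ∑ j, ∑ i, β j * β i * Real.exp (b j + b i) *
          (eps (w j k) * eps (w i k)) *
          ((∏ r ∈ Finset.univ.erase k, eps (w j r + w i r)) -
            ∏ r ∈ Finset.univ.erase k, eps (w j r) * eps (w i r)) := by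
    rw [hsq, hmean, sq, Finset.sum_mul_sum, ← Finset.sum_sub_distrib]
    refine Finset.sum_congr rfl fun j _ => ?_
    rw [← Finset.sum_sub_distrib]
    refine Finset.sum_congr rfl fun i _ => ?_
    rw [ha]
    simp only [Finset.prod_mul_distrib, Real.exp_add]
    ring
  rw [key]
  ring
end

section
/- For a nonempty subset u ⊆ {1,…,d}, define the ANOVA component f̂_u(x) = Σ_{v ⊆ u} (−1)^{|u|−|v|} E(f̂ | x_l, l ∈ v), where E(f̂ | x_l, l ∈ v) is the integral of f̂ over the coordinates outside v. Then ∫_{[0,1]^d} f̂_u(x)² dx = Σ_{v, ṽ ⊆ u} Σ_{j=1}^n Σ_{i=1}^n (−1)^{2|u|−|v|−|ṽ|} β_j β_i e^{b_j + b_i} ( ∏_{l ∈ v ∩ ṽ} ε(w_{j,l} + w_{i,l}) ) ( ∏_{r ∉ v ∩ ṽ} ε(w_{j,r}) ε(w_{i,r}) ). -/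
open MeasureTheory Real

/-- Conditional expectation of `f` given the coordinates in `v`:
the integral of `f` over the coordinates outside `v`, with the coordinates in `v`
fixed to those of `x`. -/
noncomputable def condExp {d : ℕ} (f : (Fin d → ℝ) → ℝ) (v : Finset (Fin d))
    (x : Fin d → ℝ) : ℝ :=
  ∫ y in Set.Icc (0 : Fin d → ℝ) 1, f (fun l => if l ∈ v then x l else y l)

/-- ANOVA component of `f` associated with the subset `u`:
`f_u(x) = Σ_{v ⊆ u} (−1)^{|u|−|v|} E(f | x_l, l ∈ v)`. -/
noncomputable def anova {d : ℕ} (f : (Fin d → ℝ) → ℝ) (u : Finset (Fin d))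
    (x : Fin d → ℝ) : ℝ :=
  ∑ v ∈ u.powerset, (-1 : ℝ) ^ (u.card - v.card) * condExp f v x


lemma eps1 (c : ℝ) : ∫ t in Set.Icc (0:ℝ) 1, Real.exp (c * t) = eps c := by
  rw [MeasureTheory.integral_Icc_eq_integral_Ioc,
      ← intervalIntegral.integral_of_le zero_le_one]
  unfold eps
  split_ifs with h
  · simp [h]
  · have D : ∀ x : ℝ, HasDerivAt (fun y : ℝ => Real.exp (c * y) / c) (Real.exp (c * x)) x := by
      intro x
      have := ((Real.hasDerivAt_exp (c * x)).comp x ((hasDerivAt_id x).const_mul c)).div_const c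
      simpa [mul_comm, mul_div_assoc, mul_div_cancel_left₀ _ h] using this
    rw [intervalIntegral.integral_eq_sub_of_hasDerivAt (fun x _ => D x)
      ((Real.continuous_exp.comp (continuous_const.mul continuous_id)).intervalIntegrable 0 1)]
    simp [sub_div]

lemma epsd (d : ℕ) (c : Fin d → ℝ) :
    ∫ x in Set.Icc (0 : Fin d → ℝ) 1, Real.exp (∑ l, c l * x l) = ∏ l, eps (c l) := by
  have key : ∀ x : Fin d → ℝ,
      Set.indicator (Set.Icc (0 : Fin d → ℝ) 1) (fun x => Real.exp (∑ l, c l * x l)) x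
        = ∏ l, Set.indicator (Set.Icc (0:ℝ) 1) (fun t => Real.exp (c l * t)) (x l) := by
    intro x
    by_cases h : x ∈ Set.Icc (0 : Fin d → ℝ) 1
    · have hl : ∀ l, x l ∈ Set.Icc (0:ℝ) 1 := fun l => ⟨h.1 l, h.2 l⟩
      simp only [Set.indicator_of_mem h, Set.indicator_of_mem (hl _), Real.exp_sum]
    · obtain ⟨l, hl⟩ : ∃ l, x l ∉ Set.Icc (0:ℝ) 1 := by
        by_contra hc
        push_neg at hc
        exact h ⟨fun l => (hc l).1, fun l => (hc l).2⟩
      rw [Set.indicator_of_notMem h]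
      exact (Finset.prod_eq_zero (Finset.mem_univ l)
        (by rw [Set.indicator_of_notMem hl])).symm
  rw [← MeasureTheory.integral_indicator measurableSet_Icc]
  simp_rw [key]
  rw [MeasureTheory.integral_fintype_prod_volume_eq_prod (ι := Fin d)
    (fun l t => Set.indicator (Set.Icc (0:ℝ) 1) (fun s => Real.exp (c l * s)) t)]
  exact Finset.prod_congr rfl fun l _ => by
    rw [MeasureTheory.integral_indicator measurableSet_Icc, eps1]

lemma integ (d : ℕ) (c : Fin d → ℝ) :
    IntegrableOn (fun y : Fin d → ℝ => Real.exp (∑ l, c l * y l)) (Set.Icc 0 1) := by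
  apply ContinuousOn.integrableOn_compact isCompact_Icc
  exact (Real.continuous_exp.comp
    (continuous_finset_sum _ fun l _ => continuous_const.mul (continuous_apply l))).continuousOn

lemma condExp_elm {d n : ℕ} (β b : Fin n → ℝ) (w : Fin n → Fin d → ℝ)
    (v : Finset (Fin d)) (x : Fin d → ℝ) :
    condExp (elm β b w) v x
      = ∑ j, (β j * Real.exp (b j) * ∏ l, (if l ∈ v then (1:ℝ) else eps (w j l)))
          * Real.exp (∑ l, (if l ∈ v then w j l else 0) * x l) := by
  unfold _root_.condExp elm
  have step : ∀ y : Fin d → ℝ, ∀ j : Fin n,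
      β j * Real.exp ((∑ l, w j l * (if l ∈ v then x l else y l)) + b j)
        = (β j * Real.exp (b j) * Real.exp (∑ l, (if l ∈ v then w j l else 0) * x l))
            * Real.exp (∑ l, (if l ∈ v then 0 else w j l) * y l) := by
    intro y j
    have harg : ∀ l, w j l * (if l ∈ v then x l else y l)
        = (if l ∈ v then w j l else 0) * x l + (if l ∈ v then 0 else w j l) * y l := by
      intro l; by_cases h : l ∈ v <;> simp [h]
    rw [mul_assoc, mul_assoc, ← Real.exp_add, ← Real.exp_add]
    congr 2
    simp_rw [harg, Finset.sum_add_distrib]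
    ring
  simp_rw [step]
  rw [MeasureTheory.integral_finset_sum _ (fun j _ => (integ d _).const_mul _)]
  refine Finset.sum_congr rfl fun j _ => ?_
  rw [MeasureTheory.integral_const_mul, epsd]
  have : ∏ l, eps (if l ∈ v then 0 else w j l) = ∏ l, (if l ∈ v then (1:ℝ) else eps (w j l)) :=
    Finset.prod_congr rfl fun l _ => by by_cases h : l ∈ v <;> simp [h, eps]
  rw [this]; ring

lemma prod_split {d : ℕ} (s : Finset (Fin d)) (f g : Fin d → ℝ) :
    (∏ l ∈ s, f l) * ∏ l ∈ sᶜ, g l = ∏ l, (if l ∈ s then f l else g l) := by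
  rw [← Finset.prod_mul_prod_compl s (fun l => if l ∈ s then f l else g l)]
  congr 1
  · exact Finset.prod_congr rfl fun l hl => by simp [hl]
  · exact Finset.prod_congr rfl fun l hl => by simp [Finset.mem_compl.mp hl]

/-- For a nonempty subset `u ⊆ {1,…,d}`, the second moment of the ANOVA component
`f̂_u` of the ELM surrogate satisfies
`∫_{[0,1]^d} f̂_u(x)² dx = Σ_{v,ṽ ⊆ u} Σ_j Σ_i (−1)^{2|u|−|v|−|ṽ|} β_j β_i e^{b_j+b_i}
  (∏_{l∈v∩ṽ} ε(w_{j,l}+w_{i,l})) (∏_{r∉v∩ṽ} ε(w_{j,r}) ε(w_{i,r}))`. -/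
theorem elm_anova_second_moment (d n : ℕ) (hd : 0 < d) (hn : 0 < n)
    (β b : Fin n → ℝ) (w : Fin n → Fin d → ℝ)
    (u : Finset (Fin d)) (hu : u.Nonempty) :
    ∫ x in Set.Icc (0 : Fin d → ℝ) 1, (anova (elm β b w) u x) ^ 2 =
      ∑ v ∈ u.powerset, ∑ v' ∈ u.powerset, ∑ j, ∑ i,
        (-1 : ℝ) ^ (2 * u.card - v.card - v'.card) *
          β j * β i * Real.exp (b j + b i) *
          (∏ l ∈ v ∩ v', eps (w j l + w i l)) *
          ∏ r ∈ (v ∩ v')ᶜ, eps (w j r) * eps (w i r) := by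
  set A : Finset (Fin d) → Fin n → ℝ := fun v j =>
    (-1 : ℝ) ^ (u.card - v.card) * (β j * Real.exp (b j)
      * ∏ l, (if l ∈ v then (1:ℝ) else eps (w j l))) with hA
  set e : Finset (Fin d) → Fin n → Fin d → ℝ := fun v j l =>
    if l ∈ v then w j l else 0 with he
  have hanova : ∀ x : Fin d → ℝ, anova (elm β b w) u x
      = ∑ v ∈ u.powerset, ∑ j, A v j * Real.exp (∑ l, e v j l * x l) := by
    intro x
    unfold anova
    refine Finset.sum_congr rfl fun v _ => ?_
    rw [condExp_elm, Finset.mul_sum]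
    exact Finset.sum_congr rfl fun j _ => by rw [hA]; ring
  have hsq : ∀ x : Fin d → ℝ, (anova (elm β b w) u x) ^ 2
      = ∑ v ∈ u.powerset, ∑ v' ∈ u.powerset, ∑ j, ∑ i,
          (A v j * A v' i) * Real.exp (∑ l, (e v j l + e v' i l) * x l) := by
    intro x
    rw [hanova, sq, Finset.sum_mul_sum]
    refine Finset.sum_congr rfl fun v _ => Finset.sum_congr rfl fun v' _ => ?_
    rw [Finset.sum_mul_sum]
    refine Finset.sum_congr rfl fun j _ => Finset.sum_congr rfl fun i _ => ?_
    rw [mul_mul_mul_comm, ← Real.exp_add, ← Finset.sum_add_distrib]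
    simp_rw [← add_mul]
  simp_rw [hsq]
  rw [MeasureTheory.integral_finset_sum _ (fun v _ => by
    refine MeasureTheory.integrable_finset_sum _ (fun v' _ => ?_)
    refine MeasureTheory.integrable_finset_sum _ (fun j _ => ?_)
    exact MeasureTheory.integrable_finset_sum _ (fun i _ => (integ d _).const_mul _))]
  refine Finset.sum_congr rfl fun v hv => ?_
  rw [MeasureTheory.integral_finset_sum _ (fun v' _ => by
    refine MeasureTheory.integrable_finset_sum _ (fun j _ => ?_)
    exact MeasureTheory.integrable_finset_sum _ (fun i _ => (integ d _).const_mul _))]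
  refine Finset.sum_congr rfl fun v' hv' => ?_
  rw [MeasureTheory.integral_finset_sum _ (fun j _ =>
    MeasureTheory.integrable_finset_sum _ (fun i _ => (integ d _).const_mul _))]
  refine Finset.sum_congr rfl fun j _ => ?_
  rw [MeasureTheory.integral_finset_sum _ (fun i _ => (integ d _).const_mul _)]
  refine Finset.sum_congr rfl fun i _ => ?_
  rw [MeasureTheory.integral_const_mul, epsd]
  -- now pure algebra
  have hvu : v.card ≤ u.card := Finset.card_le_card (Finset.mem_powerset.mp hv)
  have hv'u : v'.card ≤ u.card := Finset.card_le_card (Finset.mem_powerset.mp hv')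
  have hsign : ((-1 : ℝ)) ^ (u.card - v.card) * (-1 : ℝ) ^ (u.card - v'.card)
      = (-1 : ℝ) ^ (2 * u.card - v.card - v'.card) := by
    rw [← pow_add]
    congr 1
    omega
  have hprod : (∏ l, (if l ∈ v then (1:ℝ) else eps (w j l)))
      * (∏ l, (if l ∈ v' then (1:ℝ) else eps (w i l)))
      * ∏ l, eps (e v j l + e v' i l)
      = (∏ l ∈ v ∩ v', eps (w j l + w i l)) * ∏ r ∈ (v ∩ v')ᶜ, eps (w j r) * eps (w i r) := by
    rw [prod_split, ← Finset.prod_mul_distrib, ← Finset.prod_mul_distrib]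
    refine Finset.prod_congr rfl fun l _ => ?_
    by_cases h1 : l ∈ v <;> by_cases h2 : l ∈ v' <;>
      simp [he, h1, h2, eps, mul_comm]
  rw [hA]
  calc (-1 : ℝ) ^ (u.card - v.card) * (β j * Real.exp (b j) * ∏ l, if l ∈ v then 1 else eps (w j l)) *
        ((-1 : ℝ) ^ (u.card - v'.card) * (β i * Real.exp (b i) * ∏ l, if l ∈ v' then 1 else eps (w i l))) *
        ∏ l, eps (e v j l + e v' i l)
      = ((-1 : ℝ) ^ (u.card - v.card) * (-1 : ℝ) ^ (u.card - v'.card)) * β j * β i *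
        (Real.exp (b j) * Real.exp (b i)) *
        ((∏ l, (if l ∈ v then (1:ℝ) else eps (w j l)))
          * (∏ l, (if l ∈ v' then (1:ℝ) else eps (w i l)))
          * ∏ l, eps (e v j l + e v' i l)) := by ring
    _ = _ := by rw [hsign, hprod, ← Real.exp_add]; ring
end
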